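/- Let C be a coloration of W_τ(X). Then for every class K ⊆ Alg(τ), χ_C^A[Mod CId K] = Mod CId K. -/

import Mathlib

/-!
Common framework: terms of a fixed type `τ = (ar i)_{i : I}`, algebras,
identities, hypersubstitutions, multi-hypersubstitutions and colorations,
following Denecke–Koppitz–Shtrakov, "Multi-hypersubstitutions and colored
solid varieties".
-/

namespace ColoredSolid

/-- Terms of type `τ` (arities `ar`) over the countably infinite
variable set `X = {x₀, x₁, …}` (variables indexed by `ℕ`). -/
inductive Term (I : Type) (ar : I → ℕ) : Type
  | var : ℕ → Term I ar
  | app : (i : I) → (Fin (ar i) → Term I ar) → Term I ar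

variable {I : Type} {ar : I → ℕ}

/-- The set of (indices of) variables occurring in a term. -/
def Term.varSet : Term I ar → Set ℕ
  | .var n => {n}
  | .app _ ts => ⋃ k, (ts k).varSet

/-- Simultaneous substitution of terms for variables. -/
def subst (θ : ℕ → Term I ar) : Term I ar → Term I ar
  | .var n => θ n
  | .app i ts => .app i fun k => subst θ (ts k)

/-- Pad a `Fin (ar i)`-indexed family of terms to a total substitution. -/
def pad {i : I} (g : Fin (ar i) → Term I ar) : ℕ → Term I ar :=
  fun j => if h : j < ar i then g ⟨j, h⟩ else .var j

/-- The extension `σ̂` of a hypersubstitution to all terms. -/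
def hat (σ : (i : I) → Term I ar) : Term I ar → Term I ar
  | .var n => .var n
  | .app i ts => subst (pad fun k => hat σ (ts k)) (σ i)

/-- A hypersubstitution is proper when each `σ(fᵢ)` is an `nᵢ`-ary term,
i.e. uses only the variables `x₀, …, x_{nᵢ-1}`. -/
def Proper (σ : (i : I) → Term I ar) : Prop :=
  ∀ i, ∀ n ∈ (σ i).varSet, n < ar i

/-- `Hyp I ar` : the hypersubstitutions of type `τ`. -/
def Hyp (I : Type) (ar : I → ℕ) : Type := {σ : (i : I) → Term I ar // Proper σ}

/-- The identity hypersubstitution (as a raw function). -/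
def hypIdFun : (i : I) → Term I ar := fun i => .app i fun k => .var k.val

lemma proper_hypIdFun : Proper (hypIdFun (I := I) (ar := ar)) := by
  intro i n hn
  simp only [hypIdFun, Term.varSet, Set.mem_iUnion, Set.mem_singleton_iff] at hn
  obtain ⟨k, rfl⟩ := hn
  exact k.isLt

/-- The identity hypersubstitution `σ_id`. -/
def hypId : Hyp I ar := ⟨hypIdFun, proper_hypIdFun⟩

lemma varSet_subst (θ : ℕ → Term I ar) (t : Term I ar) :
    (subst θ t).varSet ⊆ ⋃ n ∈ t.varSet, (θ n).varSet := by
  induction t with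
  | var n => simp [subst, Term.varSet]
  | app i ts ih =>
    intro m hm
    simp only [subst, Term.varSet, Set.mem_iUnion] at hm
    obtain ⟨k, hk⟩ := hm
    have := ih k hk
    simp only [Set.mem_iUnion, Term.varSet] at this ⊢
    obtain ⟨n, hn1, hn2⟩ := this
    exact ⟨n, ⟨⟨k, hn1⟩, hn2⟩⟩

lemma varSet_hat {σ : (i : I) → Term I ar} (hσ : Proper σ) :
    ∀ t : Term I ar, (hat σ t).varSet ⊆ t.varSet := by
  intro t
  induction t with
  | var n => simp [hat]
  | app i ts ih =>
    intro m hm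
    rw [hat] at hm
    have hmem := varSet_subst _ _ hm
    simp only [Set.mem_iUnion] at hmem
    obtain ⟨n, hn, hm2⟩ := hmem
    have hlt := hσ i n hn
    simp only [pad, dif_pos hlt] at hm2
    have := ih ⟨n, hlt⟩ hm2
    simp only [Term.varSet, Set.mem_iUnion]
    exact ⟨⟨n, hlt⟩, this⟩

/-- Composition of hypersubstitutions (raw functions): `σ₁ ∘ₕ σ₂`. -/
def hypCompFun (σ₁ σ₂ : (i : I) → Term I ar) : (i : I) → Term I ar := fun i => hat σ₁ (σ₂ i)

lemma proper_hypCompFun {σ₁ σ₂ : (i : I) → Term I ar} (h₁ : Proper σ₁) (h₂ : Proper σ₂) :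
    Proper (hypCompFun σ₁ σ₂) :=
  fun i n hn => h₂ i n (varSet_hat h₁ (σ₂ i) hn)

/-- Composition of hypersubstitutions: `σ₁ ∘ₕ σ₂ := σ̂₁ ∘ σ₂`. -/
def hypComp (σ₁ σ₂ : Hyp I ar) : Hyp I ar :=
  ⟨hypCompFun σ₁.val σ₂.val, proper_hypCompFun σ₁.property σ₂.property⟩

/-- `M` is a submonoid of the monoid `Hyp(τ)` of all hypersubstitutions. -/
def IsSubmonoid (M : Set (Hyp I ar)) : Prop :=
  hypId ∈ M ∧ ∀ σ₁ ∈ M, ∀ σ₂ ∈ M, hypComp σ₁ σ₂ ∈ M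

/-- An algebra of type `τ`: a (nonempty) carrier together with an
`nᵢ`-ary operation for every operation symbol `fᵢ`. -/
structure Alg (I : Type) (ar : I → ℕ) where
  carrier : Type
  nonempty : Nonempty carrier
  op : ∀ i, (Fin (ar i) → carrier) → carrier

/-- Evaluation of a term in an algebra under a valuation of the variables. -/
def Alg.eval (A : Alg I ar) (v : ℕ → A.carrier) : Term I ar → A.carrier
  | .var n => v n
  | .app i ts => A.op i fun k => A.eval v (ts k)

/-- Identities `s ≈ t` are pairs of terms. -/
abbrev Eqn (I : Type) (ar : I → ℕ) := Term I ar × Term I ar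

/-- The identity `e` holds in the algebra `A`. -/
def holds (A : Alg I ar) (e : Eqn I ar) : Prop :=
  ∀ v : ℕ → A.carrier, A.eval v e.1 = A.eval v e.2

/-- `Id K` : the identities holding in every algebra of the class `K`. -/
def IdS (K : Set (Alg I ar)) : Set (Eqn I ar) := {e | ∀ A ∈ K, holds A e}

/-- `Mod Σ` : the class of algebras satisfying every identity of `Σ`. -/
def ModS (E : Set (Eqn I ar)) : Set (Alg I ar) := {A | ∀ e ∈ E, holds A e}

/-- `χ_M^E[Σ] = {σ̂[u] ≈ σ̂[v] | u ≈ v ∈ Σ, σ ∈ M}`. -/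
def chiE (M : Set (Hyp I ar)) (E : Set (Eqn I ar)) : Set (Eqn I ar) :=
  {e | ∃ σ ∈ M, ∃ uv ∈ E, e = (hat σ.val uv.1, hat σ.val uv.2)}

/-- The derived algebra `σ(𝒜)` (same carrier, operations `σ(fᵢ)^𝒜`). -/
noncomputable def derive (σ : (i : I) → Term I ar) (A : Alg I ar) : Alg I ar where
  carrier := A.carrier
  nonempty := A.nonempty
  op i args := A.eval
    (fun j => if h : j < ar i then args ⟨j, h⟩ else Classical.choice A.nonempty) (σ i)

/-- `χ_M^A[K] = {σ(𝒜) | 𝒜 ∈ K, σ ∈ M}`. -/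
def chiA (M : Set (Hyp I ar)) (K : Set (Alg I ar)) : Set (Alg I ar) :=
  {B | ∃ σ ∈ M, ∃ A ∈ K, B = derive σ.val A}

/-- `H_M Id K` : the `M`-hyperidentities of the class `K`. -/
def HId (M : Set (Hyp I ar)) (K : Set (Alg I ar)) : Set (Eqn I ar) :=
  {e | ∀ σ ∈ M, (hat σ.val e.1, hat σ.val e.2) ∈ IdS K}

/-- `H_M Mod Σ` : the algebras `M`-hypersatisfying every identity of `Σ`. -/
def HMod (M : Set (Hyp I ar)) (E : Set (Eqn I ar)) : Set (Alg I ar) :=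
  {A | ∀ σ ∈ M, ∀ uv ∈ E, holds A (hat σ.val uv.1, hat σ.val uv.2)}

/-!  Colorations and multi-hypersubstitutions. -/

/-- `addresses t` : the set of addresses of occurrences of operation symbols
in the term `t` (an address is the list of argument positions leading from
the root to the occurrence). -/
def addresses : Term I ar → Set (List ℕ)
  | .var _ => ∅
  | .app i ts => insert [] (⋃ k : Fin (ar i), (fun l => k.val :: l) '' addresses (ts k))

/-- A coloration `C` of `W_τ(X)` assigns to every term `t` a coloration
`α_t` of its addresses (only the values on `addresses t` matter). -/
def Coloration (I : Type) (ar : I → ℕ) : Type := Term I ar → List ℕ → ℕ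

/-- A multi-hypersubstitution is a map `ρ : ℕ → Hyp(τ)`; here, its
underlying raw function is extended to the subterms of a term, tracking the
address of the current subterm, with colors given by `α`. -/
def mhatAux (ρ : ℕ → (i : I) → Term I ar) (α : List ℕ → ℕ) : List ℕ → Term I ar → Term I ar
  | _, .var n => .var n
  | a, .app i ts =>
      subst (pad fun k => mhatAux ρ α (a ++ [k.val]) (ts k)) (ρ (α a) i)

/-- `ρ̂_C[t]` : application of the multi-hypersubstitution `ρ` to the term
`t`, colored by `C`. -/
def mhat (C : Coloration I ar) (ρ : ℕ → Hyp I ar) (t : Term I ar) : Term I ar :=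
  mhatAux (fun n => (ρ n).val) (C t) [] t

/-- `χ_C^e[Σ] = {ρ̂_C[u] ≈ ρ̂_C[v] | u ≈ v ∈ Σ, ρ ∈ Hyp(τ)^ℕ}`. -/
def chiCe (C : Coloration I ar) (E : Set (Eqn I ar)) : Set (Eqn I ar) :=
  {e | ∃ ρ : ℕ → Hyp I ar, ∃ uv ∈ E, e = (mhat C ρ uv.1, mhat C ρ uv.2)}

/-- The iterates `χ_C^{e,n}` of `χ_C^e` (with `χ_C^{e,0} = χ_C^e`). -/
def chiCiter (C : Coloration I ar) : ℕ → Set (Eqn I ar) → Set (Eqn I ar)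
  | 0, E => chiCe C E
  | n + 1, E => chiCe C (chiCiter C n E)

/-- `χ_C^E[Σ] = ⋃ₙ χ_C^{e,n}[Σ]`. -/
def chiCE (C : Coloration I ar) (E : Set (Eqn I ar)) : Set (Eqn I ar) :=
  ⋃ n, chiCiter C n E

/-- The derived algebra `ρ[𝒜]`, with operations
`fᵢ^{ρ[𝒜]} := (ρ̂_C[fᵢ(x₁,…,x_{nᵢ})])^𝒜`. -/
noncomputable def deriveC (C : Coloration I ar) (ρ : ℕ → Hyp I ar) (A : Alg I ar) :
    Alg I ar where
  carrier := A.carrier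
  nonempty := A.nonempty
  op i args := A.eval
    (fun j => if h : j < ar i then args ⟨j, h⟩ else Classical.choice A.nonempty)
    (mhat C ρ (.app i fun k => .var k.val))

/-- `χ_C^A[K] = {ρ[𝒜] | 𝒜 ∈ K, ρ ∈ Hyp(τ)^ℕ}`. -/
def chiCA (C : Coloration I ar) (K : Set (Alg I ar)) : Set (Alg I ar) :=
  {B | ∃ ρ : ℕ → Hyp I ar, ∃ A ∈ K, B = deriveC C ρ A}

/-- `CMod Σ = {𝒜 | χ_C^E[Σ] ⊆ Id 𝒜}`. -/
def CMod (C : Coloration I ar) (E : Set (Eqn I ar)) : Set (Alg I ar) :=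
  {A | chiCE C E ⊆ {e | holds A e}}

/-- `CId K = {s ≈ t | χ_C^E[{s ≈ t}] ⊆ Id K}`. -/
def CId (C : Coloration I ar) (K : Set (Alg I ar)) : Set (Eqn I ar) :=
  {e | chiCE C {e} ⊆ IdS K}

variable {I : Type} {ar : I → ℕ}

lemma subst_var' : ∀ t : Term I ar, subst (fun n => Term.var n) t = t
  | .var _ => rfl
  | .app i ts => by
    simp only [subst]
    congr 1
    funext k
    exact subst_var' (ts k)

lemma pad_var' (i : I) :
    pad (fun k : Fin (ar i) => Term.var (I := I) (ar := ar) k.val) = fun j => Term.var j := by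
  funext j
  unfold pad
  split <;> rfl

lemma subst_pad_var' {i : I} (s : Term I ar) :
    subst (pad fun k : Fin (ar i) => Term.var k.val) s = s := by
  rw [pad_var']; exact subst_var' s

/-- The hypersubstitution induced by a multi-hypersubstitution via the colors
of the basic terms. -/
def sigOf (C : Coloration I ar) (ρ : ℕ → Hyp I ar) : (i : I) → Term I ar :=
  fun i => (ρ (C (.app i fun k => .var k.val) [])).val i

lemma proper_sigOf (C : Coloration I ar) (ρ : ℕ → Hyp I ar) : Proper (sigOf C ρ) :=
  fun i n hn => (ρ _).property i n hn

lemma mhat_basic (C : Coloration I ar) (ρ : ℕ → Hyp I ar) (i : I) :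
    mhat C ρ (.app i fun k => .var k.val) = sigOf C ρ i := by
  show mhatAux _ _ [] _ = _
  rw [mhatAux]
  have h : (fun k : Fin (ar i) => mhatAux (fun n => (ρ n).val)
      (C (.app i fun k => .var k.val)) ([] ++ [k.val]) (Term.var k.val))
      = fun k : Fin (ar i) => Term.var (I := I) (ar := ar) k.val := rfl
  rw [h, subst_pad_var']
  rfl

lemma mhatAux_const (σ : (i : I) → Term I ar) (α : List ℕ → ℕ) :
    ∀ (a : List ℕ) (t : Term I ar), mhatAux (fun _ => σ) α a t = hat σ t
  | _, .var _ => rfl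
  | a, .app i ts => by
    rw [mhatAux, hat]
    have h : (fun k : Fin (ar i) => mhatAux (fun _ => σ) α (a ++ [k.val]) (ts k))
        = fun k => hat σ (ts k) := funext fun k => mhatAux_const σ α _ (ts k)
    rw [h]

lemma eval_subst (A : Alg I ar) (v : ℕ → A.carrier) (θ : ℕ → Term I ar) :
    ∀ t, A.eval v (subst θ t) = A.eval (fun n => A.eval v (θ n)) t
  | .var _ => rfl
  | .app i ts => by
    simp only [subst, Alg.eval]
    congr 1
    funext k
    exact eval_subst A v θ (ts k)

lemma eval_congr (A : Alg I ar) {v w : ℕ → A.carrier} :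
    ∀ t, (∀ n ∈ t.varSet, v n = w n) → A.eval v t = A.eval w t
  | .var n, h => h n rfl
  | .app i ts, h => by
    simp only [Alg.eval]
    congr 1
    funext k
    exact eval_congr A (ts k) fun n hn => h n (Set.mem_iUnion.2 ⟨k, hn⟩)

lemma eval_deriveC (C : Coloration I ar) (ρ : ℕ → Hyp I ar) (A : Alg I ar)
    (v : ℕ → A.carrier) :
    ∀ t, (deriveC C ρ A).eval v t = A.eval v (hat (sigOf C ρ) t)
  | .var _ => rfl
  | .app i ts => by
    have lhs : (deriveC C ρ A).eval v (.app i ts)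
        = (deriveC C ρ A).op i fun k => (deriveC C ρ A).eval v (ts k) := rfl
    rw [lhs]
    show A.eval _ (mhat C ρ (.app i fun k => .var k.val)) = _
    rw [mhat_basic, hat, eval_subst]
    apply eval_congr
    intro n hn
    have hlt := proper_sigOf C ρ i n hn
    simp only [pad, dif_pos hlt]
    exact (dif_pos hlt).trans (eval_deriveC C ρ A v (ts ⟨n, hlt⟩))

lemma chiCe_mono (C : Coloration I ar) {E E' : Set (Eqn I ar)} (h : E ⊆ E') :
    chiCe C E ⊆ chiCe C E' := by
  rintro e ⟨ρ, uv, huv, rfl⟩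
  exact ⟨ρ, uv, h huv, rfl⟩

lemma chiCiter_mono (C : Coloration I ar) (n : ℕ) {E E' : Set (Eqn I ar)} (h : E ⊆ E') :
    chiCiter C n E ⊆ chiCiter C n E' := by
  induction n with
  | zero => exact chiCe_mono C h
  | succ n ih => exact chiCe_mono C ih

lemma chiCiter_chiCe (C : Coloration I ar) (n : ℕ) (E : Set (Eqn I ar)) :
    chiCiter C n (chiCe C E) = chiCiter C (n + 1) E := by
  induction n with
  | zero => rfl
  | succ n ih => show chiCe C _ = chiCe C _; rw [ih]

lemma cId_closed (C : Coloration I ar) (K : Set (Alg I ar)) {e e' : Eqn I ar}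
    (he : e ∈ CId C K) (h' : e' ∈ chiCe C {e}) : e' ∈ CId C K := by
  intro x hx
  rw [chiCE, Set.mem_iUnion] at hx
  obtain ⟨n, hn⟩ := hx
  have hx2 : x ∈ chiCiter C n (chiCe C {e}) :=
    chiCiter_mono C n (Set.singleton_subset_iff.2 h') hn
  rw [chiCiter_chiCe] at hx2
  exact he (Set.mem_iUnion.2 ⟨n + 1, hx2⟩)

lemma deriveC_id (C : Coloration I ar) (A : Alg I ar) :
    deriveC C (fun _ => hypId) A = A := by
  obtain ⟨carrier, ne, op⟩ := A
  simp only [deriveC]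
  congr 1
  funext i args
  rw [mhat_basic]
  show Alg.eval ⟨carrier, ne, op⟩ _ (.app i fun k => .var k.val) = op i args
  simp only [Alg.eval]
  congr 1
  funext k
  simp only [dif_pos k.isLt]

/-- Proposition 3.14 (ii): `χ_C^A[Mod CId K] = Mod CId K`. -/
theorem chiCA_mod_cId (C : Coloration I ar) (K : Set (Alg I ar)) :
    chiCA C (ModS (CId C K)) = ModS (CId C K) := by
  apply Set.Subset.antisymm
  · rintro B ⟨ρ, A, hA, rfl⟩
    intro e he v
    rw [eval_deriveC C ρ A v, eval_deriveC C ρ A v]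
    have hmem : ((hat (sigOf C ρ) e.1, hat (sigOf C ρ) e.2) : Eqn I ar) ∈ CId C K := by
      apply cId_closed C K he
      refine ⟨fun _ => ⟨sigOf C ρ, proper_sigOf C ρ⟩, e, rfl, ?_⟩
      simp only [mhat]
      rw [mhatAux_const, mhatAux_const]
    exact hA _ hmem v
  · intro A hA
    exact ⟨fun _ => hypId, A, hA, (deriveC_id C A).symm⟩

end ColoredSolid
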